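/- Let $(X,d)$ be a metric space, $x_0,x_1,x\in X$, $\vartheta\in(0,1)$, $\eps\in(0,1)$. If $x$ is a $(\vartheta,\eps)$-intermediate point between $x_0$ and $x_1$, then $\left|\frac{d(x_0,x)}{\vartheta}-\frac{d(x,x_1)}{1-\vartheta}\right|\le \eps\, d(x_0,x_1)$ and $d(x_0,x)+d(x,x_1)\le d(x_0,x_1)\sqrt{1+\eps^2\vartheta(1-\vartheta)}$. -/
import Mathlib


/-- `x` is a `(θ, ε)`-intermediate point between `x₀` and `x₁`. -/
def IsIntermediatePt {X : Type*} [MetricSpace X] (x₀ x₁ x : X) (θ ε : ℝ) : Prop :=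
  dist x₀ x ^ 2 / θ + dist x x₁ ^ 2 / (1 - θ) ≤ dist x₀ x₁ ^ 2 * (1 + ε ^ 2 * θ * (1 - θ))

theorem stmt0 {X : Type*} [MetricSpace X] (x₀ x₁ x : X) (θ ε : ℝ)
    (hθ : θ ∈ Set.Ioo (0:ℝ) 1) (hε : ε ∈ Set.Ioo (0:ℝ) 1)
    (h : IsIntermediatePt x₀ x₁ x θ ε) :
    |dist x₀ x / θ - dist x x₁ / (1 - θ)| ≤ ε * dist x₀ x₁ ∧
    dist x₀ x + dist x x₁ ≤ dist x₀ x₁ * Real.sqrt (1 + ε ^ 2 * θ * (1 - θ)) := by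
  obtain ⟨hθ0, hθ1⟩ := hθ
  obtain ⟨hε0, hε1⟩ := hε
  set a := dist x₀ x with ha
  set b := dist x x₁ with hb
  set D := dist x₀ x₁ with hD
  have hθ0' : θ ≠ 0 := ne_of_gt hθ0
  have hθ1' : (1 : ℝ) - θ ≠ 0 := by linarith
  have hθ1pos : (0:ℝ) < 1 - θ := by linarith
  have htri : D ≤ a + b := dist_triangle x₀ x x₁
  have hDnn : 0 ≤ D := dist_nonneg
  have habnn : 0 ≤ a + b := by positivity
  have key : a ^ 2 / θ + b ^ 2 / (1 - θ)
      = (a + b) ^ 2 + θ * (1 - θ) * (a / θ - b / (1 - θ)) ^ 2 := by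
    field_simp
    ring
  unfold IsIntermediatePt at h
  rw [key, ← hD] at h
  have hsq : (a + b) ^ 2 ≥ D ^ 2 := by nlinarith
  constructor
  · have hpos : 0 < θ * (1 - θ) := mul_pos hθ0 hθ1pos
    have h1 : θ * (1 - θ) * (a / θ - b / (1 - θ)) ^ 2 ≤ θ * (1 - θ) * (ε * D) ^ 2 := by
      nlinarith
    have ht2 : (a / θ - b / (1 - θ)) ^ 2 ≤ (ε * D) ^ 2 :=
      le_of_mul_le_mul_left h1 hpos
    have := Real.sqrt_le_sqrt ht2
    rwa [Real.sqrt_sq_eq_abs, Real.sqrt_sq_eq_abs,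
      abs_of_nonneg (by positivity : (0:ℝ) ≤ ε * D)] at this
  · have hS : (0:ℝ) ≤ 1 + ε ^ 2 * θ * (1 - θ) := by positivity
    have h2 : (a + b) ^ 2 ≤ D ^ 2 * (1 + ε ^ 2 * θ * (1 - θ)) := by nlinarith [sq_nonneg (a / θ - b / (1 - θ)), mul_pos hθ0 hθ1pos]
    calc a + b = Real.sqrt ((a + b) ^ 2) := by rw [Real.sqrt_sq habnn]
      _ ≤ Real.sqrt (D ^ 2 * (1 + ε ^ 2 * θ * (1 - θ))) := Real.sqrt_le_sqrt h2
      _ = D * Real.sqrt (1 + ε ^ 2 * θ * (1 - θ)) := by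
          rw [Real.sqrt_mul (by positivity), Real.sqrt_sq hDnn]
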